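/- With notation as above and q = q₁^m a prime power, if t = t'·q₁^{m'} with gcd(t', q₁) = 1 and 1 ≤ m' < m, then det(zI - g^t)·det(zI - ḡ^t) = Ψ_{q₁^{m-m'}}(z)^{q₁^{m'}} = Ψ_{q₁}(z^{q₁^{m-m'-1}})^{q₁^{m'}}. -/

import Mathlib

open Finset

/-- The 2×2 rotation matrix by angle `2πν`, viewed over `ℂ`. -/
noncomputable def Rot (ν : ℝ) : Matrix (Fin 2) (Fin 2) ℂ :=
  !![(Real.cos (2 * Real.pi * ν) : ℂ), (Real.sin (2 * Real.pi * ν) : ℂ);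
     (-Real.sin (2 * Real.pi * ν) : ℂ), (Real.cos (2 * Real.pi * ν) : ℂ)]

/-- The block-diagonal matrix with rotation blocks `Rot (v j / q)`. -/
noncomputable def blockRot {n : ℕ} (q : ℕ) (v : Fin n → ℤ) :
    Matrix (Fin 2 × Fin n) (Fin 2 × Fin n) ℂ :=
  Matrix.blockDiagonal (fun j => Rot ((v j : ℝ) / q))

lemma Rot_mul (a b : ℝ) : Rot a * Rot b = Rot (a + b) := by
  have h1 : 2 * Real.pi * (a + b) = 2 * Real.pi * a + (2 * Real.pi * b) := by ring
  simp only [Rot, Matrix.mul_fin_two, h1, Real.cos_add, Real.sin_add]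
  push_cast
  ring_nf

lemma Rot_pow (a : ℝ) (t : ℕ) : Rot a ^ t = Rot (t * a) := by
  induction t with
  | zero =>
    simp only [pow_zero, Nat.cast_zero, zero_mul, Rot, mul_zero, Real.cos_zero, Real.sin_zero]
    norm_num
    exact Matrix.one_fin_two
  | succ t ih =>
    rw [pow_succ, ih, Rot_mul]
    push_cast
    ring_nf

lemma det_Rot (z : ℂ) (a : ℝ) :
    (z • (1 : Matrix (Fin 2) (Fin 2) ℂ) - Rot a).det
      = (z - Complex.exp (2 * Real.pi * Complex.I * a))
        * (z - Complex.exp (-(2 * Real.pi * Complex.I * a))) := by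
  have h : (2 * Real.pi * Complex.I * a) = ((2 * Real.pi * a : ℝ) : ℂ) * Complex.I := by
    push_cast; ring
  have h2 : -(2 * Real.pi * Complex.I * a) = ((-(2 * Real.pi * a) : ℝ) : ℂ) * Complex.I := by
    push_cast; ring
  rw [h2, h, Complex.exp_mul_I, Complex.exp_mul_I]
  simp only [← Complex.ofReal_cos, ← Complex.ofReal_sin, Real.cos_neg, Real.sin_neg,
    Matrix.det_fin_two, Matrix.sub_apply, Matrix.smul_apply, Matrix.one_apply, Rot,
    Matrix.cons_val', Matrix.cons_val_zero, Matrix.cons_val_one, Matrix.head_cons,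
    Matrix.empty_val', Matrix.cons_val_fin_one, Matrix.head_fin_const]
  norm_num
  linear_combination (Complex.sin (2 * (Real.pi:ℂ) * (a:ℂ))^2) * Complex.I_sq


noncomputable def E (a : ℤ) (N : ℕ) : ℂ := Complex.exp (2 * Real.pi * Complex.I * (a / N))

lemma det_blockRot {n : ℕ} (q : ℕ) (v : Fin n → ℤ) (t : ℕ) (z : ℂ) :
    (z • (1 : Matrix (Fin 2 × Fin n) (Fin 2 × Fin n) ℂ) - (blockRot q v) ^ t).det
      = ∏ j : Fin n, ((z - E (t * v j) q) * (z - E (-(t * v j)) q)) := by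
  have hb : (blockRot q v) ^ t
      = Matrix.blockDiagonal (fun j => Rot ((t : ℝ) * ((v j : ℝ) / q))) := by
    rw [blockRot, ← Matrix.blockDiagonal_pow]
    exact congrArg _ (funext fun j => Rot_pow _ t)
  have h1 : z • (1 : Matrix (Fin 2 × Fin n) (Fin 2 × Fin n) ℂ)
      = Matrix.blockDiagonal (fun _ : Fin n => z • (1 : Matrix (Fin 2) (Fin 2) ℂ)) := by
    rw [show (fun _ : Fin n => z • (1 : Matrix (Fin 2) (Fin 2) ℂ))
        = z • (1 : Fin n → Matrix (Fin 2) (Fin 2) ℂ) from rfl,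
      ← Matrix.blockDiagonal_one, ← Matrix.blockDiagonal_smul]
  rw [hb, h1, ← Matrix.blockDiagonal_sub, Matrix.det_blockDiagonal]
  refine Finset.prod_congr rfl fun j _ => ?_
  rw [Pi.sub_apply, det_Rot]
  congr 2
  · unfold E; congr 1; push_cast; ring
  · unfold E; congr 1; push_cast; ring

lemma E_congr {N : ℕ} (hN : N ≠ 0) {a b : ℤ} (h : (a : ZMod N) = b) : E a N = E b N := by
  rw [ZMod.intCast_eq_intCast_iff] at h
  obtain ⟨c, hc⟩ := Int.ModEq.dvd h
  have hb' : b = a + (N:ℤ) * c := by linarith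
  have hb : (b : ℂ) = a + N * c := by exact_mod_cast hb'
  have hNC : (N : ℂ) ≠ 0 := by exact_mod_cast hN
  have harg : 2 * (Real.pi:ℂ) * Complex.I * ((b:ℂ)/N)
      = 2 * Real.pi * Complex.I * ((a:ℂ)/N) + c * (2 * Real.pi * Complex.I) := by
    rw [hb]; field_simp
  unfold E
  rw [harg, Complex.exp_add, Complex.exp_int_mul_two_pi_mul_I, mul_one]

lemma E_mul_cancel {c N : ℕ} (hc : c ≠ 0) (hN : N ≠ 0) (a : ℤ) : E (c * a) (c * N) = E a N := by
  unfold E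
  congr 1
  have hcC : (c : ℂ) ≠ 0 := by exact_mod_cast hc
  have hNC : (N : ℂ) ≠ 0 := by exact_mod_cast hN
  push_cast
  field_simp

lemma E_eq_pow (a N : ℕ) : E a N = Complex.exp (2 * Real.pi * Complex.I / N) ^ a := by
  unfold E
  rw [← Complex.exp_nat_mul]
  congr 1
  push_cast
  ring

lemma prod_comp_const_card {α β M : Type*} [Fintype α] [Fintype β] [DecidableEq β]
    [CommMonoid M] (f : α → β) (c : ℕ)
    (hc : ∀ b : β, (Finset.univ.filter (fun a => f a = b)).card = c) (g : β → M) :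
    ∏ a : α, g (f a) = (∏ b : β, g b) ^ c := by
  rw [← Finset.prod_fiberwise_of_maps_to (fun x _ => Finset.mem_univ (f x)) (fun a => g (f a))]
  rw [← Finset.prod_pow]
  refine Finset.prod_congr rfl fun b _ => ?_
  rw [← hc b, ← Finset.prod_const]
  exact Finset.prod_congr rfl fun a ha => by rw [(Finset.mem_filter.mp ha).2]

lemma card_fiber_of_surjective {G H : Type*} [Group G] [Group H] (π : G →* H)
    (hs : Function.Surjective π) [DecidableEq H] [Fintype G] (y : H) :
    (Finset.univ.filter (fun x => π x = y)).card = Nat.card π.ker := by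
  obtain ⟨u₀, hu₀⟩ := hs y
  have e : {x : G // π x = y} ≃ π.ker :=
    { toFun := fun x => ⟨x.1 * u₀⁻¹, by
        simp [MonoidHom.mem_ker, x.2, hu₀]⟩
      invFun := fun w => ⟨w.1 * u₀, by
        have : π w.1 = 1 := w.2
        simp [this, hu₀]⟩
      left_inv := fun x => by simp
      right_inv := fun w => by simp }
  rw [← Fintype.card_subtype, Fintype.card_congr e, Nat.card_eq_fintype_card]

lemma prod_units_eq_prod_primitiveRoots (d : ℕ) [NeZero d] (t' : ℕ)
    (ht' : Nat.Coprime t' d) (z : ℂ) :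
    ∏ y : (ZMod d)ˣ, (z - E (t' * (((y : ZMod d).val : ℕ) : ℤ)) d)
      = ∏ η ∈ primitiveRoots d ℂ, (z - η) := by
  classical
  have hd : d ≠ 0 := NeZero.ne d
  have hd0 : 0 < d := Nat.pos_of_ne_zero hd
  set ζ := Complex.exp (2 * Real.pi * Complex.I / d) with hζdef
  have hζ : IsPrimitiveRoot ζ d := Complex.isPrimitiveRoot_exp d hd
  have hord : d = orderOf ζ := hζ.eq_orderOf
  have hpow_iff : ∀ i j : ℕ, ζ ^ i = ζ ^ j ↔ (i : ZMod d) = (j : ZMod d) := by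
    intro i j
    rw [ZMod.natCast_eq_natCast_iff']
    constructor
    · intro h
      have h2 : ζ ^ (i % d) = ζ ^ (j % d) := by
        rw [hord, pow_mod_orderOf, pow_mod_orderOf]; exact h
      exact hζ.pow_inj (Nat.mod_lt _ hd0) (Nat.mod_lt _ hd0) h2
    · intro h
      calc ζ ^ i = ζ ^ (i % d) := by rw [hord, pow_mod_orderOf]
        _ = ζ ^ (j % d) := by rw [h]
        _ = ζ ^ j := by rw [hord, pow_mod_orderOf]
  have hE : ∀ y : (ZMod d)ˣ, E (t' * (((y : ZMod d).val : ℕ) : ℤ)) d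
      = ζ ^ (t' * (y : ZMod d).val) := by
    intro y
    have : (t' * (((y : ZMod d).val : ℕ) : ℤ)) = ((t' * (y : ZMod d).val : ℕ) : ℤ) := by
      push_cast; ring
    rw [this, E_eq_pow]
  refine Finset.prod_bij (fun y _ => ζ ^ (t' * (y : ZMod d).val)) ?_ ?_ ?_ ?_
  · intro y _
    rw [mem_primitiveRoots hd0]
    exact hζ.pow_of_coprime _ (Nat.Coprime.mul ht' (ZMod.val_coe_unit_coprime y))
  · intro a _ b _ hab
    have hab' : ζ ^ (t' * (a : ZMod d).val) = ζ ^ (t' * (b : ZMod d).val) := hab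
    have hcast : ((t' * (a : ZMod d).val : ℕ) : ZMod d) = ((t' * (b : ZMod d).val : ℕ) : ZMod d) :=
      (hpow_iff _ _).mp hab'
    push_cast at hcast
    rw [ZMod.natCast_val, ZMod.natCast_val, ZMod.cast_id, ZMod.cast_id] at hcast
    have ht'u : IsUnit ((t' : ℕ) : ZMod d) := (ZMod.unitOfCoprime t' ht').isUnit
    have : (a : ZMod d) = (b : ZMod d) := ht'u.mul_left_cancel hcast
    exact Units.ext this
  · intro η hη
    have hη' := (mem_primitiveRoots hd0).mp hη
    obtain ⟨i0, hi0lt, rfl⟩ := hζ.eq_pow_of_pow_eq_one hη'.pow_eq_one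
    have hcop : Nat.Coprime i0 d := (hζ.pow_iff_coprime hd0 i0).mp hη'
    refine ⟨(ZMod.unitOfCoprime t' ht')⁻¹ * ZMod.unitOfCoprime i0 hcop, Finset.mem_univ _, ?_⟩
    rw [hpow_iff]
    push_cast
    rw [ZMod.natCast_val, ZMod.cast_id]
    have h1 : ((ZMod.unitOfCoprime t' ht' : (ZMod d)ˣ) : ZMod d) = (t' : ZMod d) :=
      ZMod.coe_unitOfCoprime t' ht'
    have h2 : ((ZMod.unitOfCoprime i0 hcop : (ZMod d)ˣ) : ZMod d) = (i0 : ZMod d) :=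
      ZMod.coe_unitOfCoprime i0 hcop
    rw [← h1, ← Units.val_mul, ← Units.val_mul, mul_inv_cancel_left]
    exact h2
  · intro y _
    rw [hE y]

lemma prod_primRoots_prime_pow (p e : ℕ) (hp : p.Prime) (he : 1 ≤ e) (z : ℂ) :
    ∏ η ∈ primitiveRoots (p ^ e) ℂ, (z - η)
      = ∏ η ∈ primitiveRoots p ℂ, (z ^ (p ^ (e - 1)) - η) := by
  haveI : Fact p.Prime := ⟨hp⟩
  have hpe : (p : ℕ) ^ e ≠ 0 := pow_ne_zero _ hp.pos.ne'
  have h1 : ∏ η ∈ primitiveRoots (p ^ e) ℂ, (z - η)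
      = Polynomial.eval z (Polynomial.cyclotomic (p ^ e) ℂ) := by
    rw [Polynomial.cyclotomic_eq_prod_X_sub_primitiveRoots (Complex.isPrimitiveRoot_exp _ hpe)]
    simp [Polynomial.eval_prod]
  have h2 : ∏ η ∈ primitiveRoots p ℂ, (z ^ (p ^ (e - 1)) - η)
      = Polynomial.eval (z ^ (p ^ (e - 1))) (Polynomial.cyclotomic p ℂ) := by
    rw [Polynomial.cyclotomic_eq_prod_X_sub_primitiveRoots
      (Complex.isPrimitiveRoot_exp _ hp.pos.ne')]
    simp [Polynomial.eval_prod]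
  rw [h1, h2]
  obtain ⟨e', rfl⟩ : ∃ e', e = e' + 1 := ⟨e - 1, (Nat.succ_pred_eq_of_pos he).symm⟩
  rw [Polynomial.cyclotomic_prime_pow_eq_geom_sum hp, Polynomial.cyclotomic_prime]
  simp [Polynomial.eval_finset_sum, pow_mul]

lemma card_ker_unitsMap (q₁ m m' : ℕ) (hq₁ : q₁.Prime) (hm'1 : 1 ≤ m') (hm'2 : m' < m)
    (hdvd : q₁ ^ (m - m') ∣ q₁ ^ m) :
    Nat.card (ZMod.unitsMap hdvd).ker = q₁ ^ m' := by
  haveI : NeZero (q₁ ^ m) := ⟨pow_ne_zero _ hq₁.pos.ne'⟩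
  haveI : NeZero (q₁ ^ (m - m')) := ⟨pow_ne_zero _ hq₁.pos.ne'⟩
  set π := ZMod.unitsMap hdvd with hπ
  have hs : Function.Surjective π := ZMod.unitsMap_surjective hdvd
  have hG : Nat.card (ZMod (q₁ ^ m))ˣ
      = Nat.card (ZMod (q₁ ^ (m - m')))ˣ * Nat.card π.ker := by
    rw [Subgroup.card_eq_card_quotient_mul_card_subgroup π.ker]
    congr 1
    exact Nat.card_congr (QuotientGroup.quotientKerEquivOfSurjective π hs).toEquiv
  rw [Nat.card_eq_fintype_card, Nat.card_eq_fintype_card, ZMod.card_units_eq_totient,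
    ZMod.card_units_eq_totient, Nat.totient_prime_pow hq₁ (by omega),
    Nat.totient_prime_pow hq₁ (by omega)] at hG
  have hexp : m - 1 = (m - m' - 1) + m' := by omega
  have hk : 0 < q₁ ^ (m - m' - 1) * (q₁ - 1) :=
    Nat.mul_pos (pow_pos hq₁.pos _) (Nat.sub_pos_of_lt hq₁.one_lt)
  refine Nat.eq_of_mul_eq_mul_left hk ?_
  calc q₁ ^ (m - m' - 1) * (q₁ - 1) * Nat.card π.ker
      = q₁ ^ (m - 1) * (q₁ - 1) := by rw [hG]
    _ = q₁ ^ (m - m' - 1) * (q₁ - 1) * q₁ ^ m' := by rw [hexp, pow_add]; ring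

theorem det_mul_det_eq_cyclotomic_prime_pow (q₁ m : ℕ) (hq₁ : Nat.Prime q₁)
    (hm : 2 ≤ m) (q : ℕ) (hq : q = q₁ ^ m) (n k : ℕ)
    (r : Fin n → ℤ) (s : Fin k → ℤ)
    (hinj : Function.Injective (fun p : (Fin n ⊕ Fin k) × Bool =>
      (if p.2 then ((Sum.elim r s p.1 : ℤ) : ZMod q)
        else -((Sum.elim r s p.1 : ℤ) : ZMod q))))
    (hrange : Set.range (fun p : (Fin n ⊕ Fin k) × Bool =>
      (if p.2 then ((Sum.elim r s p.1 : ℤ) : ZMod q)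
        else -((Sum.elim r s p.1 : ℤ) : ZMod q))) = {x : ZMod q | IsUnit x})
    (t t' m' : ℕ) (ht : t = t' * q₁ ^ m') (ht' : Nat.Coprime t' q₁)
    (hm'1 : 1 ≤ m') (hm'2 : m' < m) (z : ℂ) :
    ((z • (1 : Matrix (Fin 2 × Fin n) (Fin 2 × Fin n) ℂ)
        - (blockRot q r) ^ t).det)
      * ((z • (1 : Matrix (Fin 2 × Fin k) (Fin 2 × Fin k) ℂ)
        - (blockRot q s) ^ t).det)
      = (∏ η ∈ primitiveRoots (q₁ ^ (m - m')) ℂ, (z - η)) ^ (q₁ ^ m')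
    ∧ (∏ η ∈ primitiveRoots (q₁ ^ (m - m')) ℂ, (z - η)) ^ (q₁ ^ m')
      = (∏ η ∈ primitiveRoots q₁ ℂ, (z ^ (q₁ ^ (m - m' - 1)) - η)) ^ (q₁ ^ m') := by
  classical
  subst hq
  have hq0 : q₁ ^ m ≠ 0 := pow_ne_zero _ hq₁.pos.ne'
  have hd0 : q₁ ^ (m - m') ≠ 0 := pow_ne_zero _ hq₁.pos.ne'
  haveI : NeZero (q₁ ^ m) := ⟨hq0⟩
  haveI : NeZero (q₁ ^ (m - m')) := ⟨hd0⟩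
  have hdvd : q₁ ^ (m - m') ∣ q₁ ^ m := pow_dvd_pow _ (Nat.sub_le m m')
  have ht'd : Nat.Coprime t' (q₁ ^ (m - m')) := Nat.Coprime.pow_right _ ht'
  set g : (Fin n ⊕ Fin k) × Bool → ZMod (q₁ ^ m) := fun p =>
    (if p.2 then ((Sum.elim r s p.1 : ℤ) : ZMod (q₁ ^ m))
      else -((Sum.elim r s p.1 : ℤ) : ZMod (q₁ ^ m))) with hgdef
  set F : ZMod (q₁ ^ m) → ℂ := fun x => z - E ((t : ℤ) * (x.val : ℤ)) (q₁ ^ m) with hFdef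
  set G : (ZMod (q₁ ^ (m - m')))ˣ → ℂ :=
    fun y => z - E ((t' : ℤ) * (((y : ZMod (q₁ ^ (m - m'))).val : ℕ) : ℤ)) (q₁ ^ (m - m'))
    with hGdef
  set π := ZMod.unitsMap hdvd with hπ
  constructor
  · -- the main determinant identity
    have step1 : ((z • (1 : Matrix (Fin 2 × Fin n) (Fin 2 × Fin n) ℂ)
          - (blockRot (q₁ ^ m) r) ^ t).det)
        * ((z • (1 : Matrix (Fin 2 × Fin k) (Fin 2 × Fin k) ℂ)
          - (blockRot (q₁ ^ m) s) ^ t).det)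
        = ∏ c : Fin n ⊕ Fin k, ((z - E ((t : ℤ) * Sum.elim r s c) (q₁ ^ m))
            * (z - E (-((t : ℤ) * Sum.elim r s c)) (q₁ ^ m))) := by
      rw [det_blockRot, det_blockRot, Fintype.prod_sum_type]
      simp only [Sum.elim_inl, Sum.elim_inr]
    have key : ∀ (a : ℤ) (x : ZMod (q₁ ^ m)), (a : ZMod (q₁ ^ m)) = x →
        E ((t : ℤ) * a) (q₁ ^ m) = E ((t : ℤ) * (x.val : ℤ)) (q₁ ^ m) := by
      intro a x hx
      apply E_congr hq0
      push_cast
      rw [ZMod.natCast_val, ZMod.cast_id, hx]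
    have step2 : ∏ c : Fin n ⊕ Fin k, ((z - E ((t : ℤ) * Sum.elim r s c) (q₁ ^ m))
          * (z - E (-((t : ℤ) * Sum.elim r s c)) (q₁ ^ m)))
        = ∏ p : (Fin n ⊕ Fin k) × Bool, F (g p) := by
      rw [Fintype.prod_prod_type]
      refine Finset.prod_congr rfl fun c _ => ?_
      rw [Fintype.prod_bool]
      have hgt : g (c, true) = ((Sum.elim r s c : ℤ) : ZMod (q₁ ^ m)) := by simp [hgdef]
      have hgf : g (c, false) = -((Sum.elim r s c : ℤ) : ZMod (q₁ ^ m)) := by simp [hgdef]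
      have h1 : F (g (c, true)) = z - E ((t : ℤ) * Sum.elim r s c) (q₁ ^ m) := by
        rw [hgt]
        simp only [hFdef]
        rw [← key (Sum.elim r s c) _ rfl]
      have h2 : F (g (c, false)) = z - E (-((t : ℤ) * Sum.elim r s c)) (q₁ ^ m) := by
        rw [hgf]
        simp only [hFdef]
        rw [← key (-(Sum.elim r s c)) (-(((Sum.elim r s c) : ℤ) : ZMod (q₁ ^ m)))
          (by push_cast; ring)]
        rw [show ((t : ℤ) * (-(Sum.elim r s c))) = -((t : ℤ) * Sum.elim r s c) by ring]
      rw [h1, h2]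
    have step3 : ∏ p : (Fin n ⊕ Fin k) × Bool, F (g p)
        = ∏ u : (ZMod (q₁ ^ m))ˣ, F ↑u := by
      rw [← Finset.prod_image (fun x _ y _ h => hinj h)]
      have himg : Finset.univ.image g
          = Finset.univ.image (fun u : (ZMod (q₁ ^ m))ˣ => (u : ZMod (q₁ ^ m))) := by
        apply Finset.coe_injective
        simp only [Finset.coe_image, Finset.coe_univ, Set.image_univ, hrange]
        ext x
        simp [IsUnit]
      rw [himg, Finset.prod_image (fun x _ y _ h => Units.ext h)]
    have e2 : q₁ ^ m = q₁ ^ m' * q₁ ^ (m - m') := by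
      rw [← pow_add]; congr 1; omega
    have step4 : ∀ u : (ZMod (q₁ ^ m))ˣ, F ↑u = G (π u) := by
      intro u
      simp only [hFdef, hGdef]
      have hval : (((u : ZMod (q₁ ^ m)).val : ℕ) : ZMod (q₁ ^ (m - m')))
          = ((((π u : (ZMod (q₁ ^ (m - m')))ˣ) : ZMod (q₁ ^ (m - m'))).val : ℕ)
            : ZMod (q₁ ^ (m - m'))) := by
        rw [ZMod.natCast_val, ZMod.natCast_val, ZMod.cast_id, hπ, ZMod.unitsMap_def]
        rfl
      congr 1
      generalize hb : ((π u : (ZMod (q₁ ^ (m - m')))ˣ) : ZMod (q₁ ^ (m - m'))).val = b at hval ⊢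
      generalize ha : ((u : ZMod (q₁ ^ m))).val = a at hval ⊢
      calc E ((t : ℤ) * a) (q₁ ^ m)
          = E ((q₁ ^ m' : ℕ) * ((t' : ℤ) * a)) (q₁ ^ m' * q₁ ^ (m - m')) := by
            rw [← e2]; congr 1; push_cast [ht]; ring
        _ = E ((t' : ℤ) * a) (q₁ ^ (m - m')) := E_mul_cancel (pow_ne_zero _ hq₁.pos.ne') hd0 _
        _ = E ((t' : ℤ) * b) (q₁ ^ (m - m')) := E_congr hd0 (by push_cast; rw [hval])
    have step5 : ∏ u : (ZMod (q₁ ^ m))ˣ, G (π u)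
        = (∏ y : (ZMod (q₁ ^ (m - m')))ˣ, G y) ^ (q₁ ^ m') := by
      refine prod_comp_const_card π (q₁ ^ m') (fun y => ?_) G
      rw [card_fiber_of_surjective π (ZMod.unitsMap_surjective hdvd) y]
      exact card_ker_unitsMap q₁ m m' hq₁ hm'1 hm'2 hdvd
    have step6 : ∏ y : (ZMod (q₁ ^ (m - m')))ˣ, G y
        = ∏ η ∈ primitiveRoots (q₁ ^ (m - m')) ℂ, (z - η) :=
      prod_units_eq_prod_primitiveRoots (q₁ ^ (m - m')) t' ht'd z
    rw [step1, step2, step3, Finset.prod_congr rfl (fun u _ => step4 u), step5, step6]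
  · congr 1
    exact prod_primRoots_prime_pow q₁ (m - m') hq₁ (by omega) z
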